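/- Let h : ℝ^d → ℝ be ρ-weakly convex with ρ ≥ 0, let α > 0 satisfy αρ < 1, let W be a symmetric doubly stochastic n×n matrix, set J_n = (1/n)·(all-ones matrix) and λ = ‖W − J_n‖ (operator norm for the Euclidean norm). For x, ν ∈ (ℝ^d)^n define u ∈ (ℝ^d)^n by u_i = prox_h^{α^{-1}}(x_i − α ν_i) and x⁺ = W u (W acting blockwise). Then ‖Jx⁺ − x⁺‖ ≤ (λ/(1−αρ)) ‖(x − Jx) − α(ν − Jν)‖. -/

import Mathlib

set_option maxHeartbeats 1000000


open Finset

noncomputable section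

/-- Average of a stacked vector. -/
def avg {d n : ℕ} (x : Fin n → EuclideanSpace ℝ (Fin d)) : EuclideanSpace ℝ (Fin d) :=
  (n : ℝ)⁻¹ • ∑ i, x i

/-- Blockwise action of an `n × n` matrix on a stacked vector. -/
def matAct {d n : ℕ} (W : Matrix (Fin n) (Fin n) ℝ)
    (x : Fin n → EuclideanSpace ℝ (Fin d)) : Fin n → EuclideanSpace ℝ (Fin d) :=
  fun i => ∑ j, W i j • x j

/-- The averaging matrix `J_n = (1/n) 𝟙𝟙ᵀ`. -/
def Jmat (n : ℕ) : Matrix (Fin n) (Fin n) ℝ := Matrix.of fun _ _ => (n : ℝ)⁻¹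

lemma prox_varineq {d : ℕ} {ρ α : ℝ} (hα : 0 < α) (hαρ : α * ρ < 1)
    {h : EuclideanSpace ℝ (Fin d) → ℝ}
    (hwc : ConvexOn ℝ Set.univ (fun z => h z + (ρ / 2) * ‖z‖ ^ 2))
    (y u : EuclideanSpace ℝ (Fin d))
    (hmin : ∀ z, h u + (1 / (2 * α)) * ‖u - y‖ ^ 2 ≤ h z + (1 / (2 * α)) * ‖z - y‖ ^ 2)
    (z : EuclideanSpace ℝ (Fin d)) :
    0 ≤ ((h z + (ρ/2) * ‖z‖^2) - (h u + (ρ/2) * ‖u‖^2))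
        + (α⁻¹ * (inner ℝ (u - y) (z - u) : ℝ) - ρ * (inner ℝ u (z - u) : ℝ)) := by
  set w := z - u with hw
  set A : ℝ := ((h z + (ρ/2) * ‖z‖^2) - (h u + (ρ/2) * ‖u‖^2))
        + (α⁻¹ * (inner ℝ (u - y) w : ℝ) - ρ * (inner ℝ u w : ℝ)) with hA
  set B : ℝ := ((α⁻¹ - ρ)/2) * ‖w‖^2 with hB
  have hαinv : ρ < α⁻¹ := by
    have := mul_lt_mul_of_pos_left hαρ (inv_pos.mpr hα)
    rwa [mul_one, ← mul_assoc, inv_mul_cancel₀ hα.ne', one_mul] at this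
  have hBnn : 0 ≤ B := mul_nonneg (by linarith) (sq_nonneg _)
  clear_value A B
  have key : ∀ t : ℝ, 0 < t → t ≤ 1 → 0 ≤ A + t * B := by
    intro t ht ht1
    have h2α : (0:ℝ) < 2 * α := by linarith
    have hcomb : u + t • w = (1 - t) • u + t • z := by rw [hw]; module
    have h1 := hmin (u + t • w)
    have h2 := hwc.2 (Set.mem_univ u) (Set.mem_univ z) (by linarith : (0:ℝ) ≤ 1 - t)
      (le_of_lt ht) (by ring)
    simp only [smul_eq_mul] at h2
    rw [← hcomb] at h2
    have e1 : ‖u + t • w - y‖^2 = ‖u-y‖^2 + 2*t*(inner ℝ (u-y) w : ℝ) + t^2*‖w‖^2 := by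
      have hre : u + t • w - y = (u - y) + t • w := by abel
      rw [hre, norm_add_sq_real, real_inner_smul_right, norm_smul]
      simp [Real.norm_eq_abs, mul_pow, sq_abs]; ring
    have e2 : ‖u + t • w‖^2 = ‖u‖^2 + 2*t*(inner ℝ u w : ℝ) + t^2*‖w‖^2 := by
      rw [norm_add_sq_real, real_inner_smul_right, norm_smul]
      simp [Real.norm_eq_abs, mul_pow, sq_abs]; ring
    rw [e1] at h1
    rw [e2] at h2
    -- abbreviations
    have h1' : -((2*t*(inner ℝ (u-y) w : ℝ) + t^2*‖w‖^2)) ≤ 2*α*(h (u + t • w) - h u) := by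
      have step : -((1/(2*α)) * (2*t*(inner ℝ (u-y) w : ℝ) + t^2*‖w‖^2)) ≤ h (u + t • w) - h u := by
        linarith
      have step2 := mul_le_mul_of_nonneg_left step (le_of_lt h2α)
      have heq : 2*α * -((1/(2*α)) * (2*t*(inner ℝ (u-y) w : ℝ) + t^2*‖w‖^2))
          = -((2*t*(inner ℝ (u-y) w : ℝ) + t^2*‖w‖^2)) := by
        field_simp
      linarith
    have h2' : h (u + t • w) - h u ≤
        t*((h z + (ρ/2)*‖z‖^2) - (h u + (ρ/2)*‖u‖^2)) - ρ*t*(inner ℝ u w : ℝ)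
          - (ρ/2)*t^2*‖w‖^2 := by
      nlinarith [h2]
    have h2'' := mul_le_mul_of_nonneg_left h2' (le_of_lt h2α)
    have heq2 : 2*α*(t*((h z + (ρ/2)*‖z‖^2) - (h u + (ρ/2)*‖u‖^2)) - ρ*t*(inner ℝ u w : ℝ)
          - (ρ/2)*t^2*‖w‖^2) + (2*t*(inner ℝ (u-y) w : ℝ) + t^2*‖w‖^2)
        = 2*α*t*(A + t*B) := by
      rw [hA, hB]
      field_simp
      ring
    have hfin : 0 ≤ 2*α*t*(A + t*B) := by rw [← heq2]; linarith
    by_contra hcon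
    push_neg at hcon
    have hpos : (0:ℝ) < 2 * α * t := mul_pos h2α ht
    nlinarith [mul_pos hpos (neg_pos.mpr hcon)]
  by_contra hneg
  push_neg at hneg
  set t : ℝ := min 1 (-A / (2 * (B + 1))) with htdef
  clear_value t
  have hBp : (0:ℝ) < B + 1 := by linarith
  have htpos : 0 < t := by
    rw [htdef]
    refine lt_min one_pos (div_pos ?_ ?_) <;> linarith
  have ht1 : t ≤ 1 := htdef ▸ min_le_left _ _
  have ht2 : t ≤ -A / (2 * (B + 1)) := htdef ▸ min_le_right _ _
  have hkey := key t htpos ht1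
  have htB1 : t * (B+1) ≤ (-A / (2*(B+1))) * (B+1) := mul_le_mul_of_nonneg_right ht2 hBp.le
  have htB2 : (-A / (2*(B+1))) * (B+1) = -A/2 := by field_simp
  have hexp : t*(B+1) = t*B + t := by ring
  linarith [htB1, htB2, hkey, htpos, hneg, hexp]

lemma prox_pair {d : ℕ} {ρ α : ℝ} (hα : 0 < α) (hαρ : α * ρ < 1)
    {h : EuclideanSpace ℝ (Fin d) → ℝ}
    (hwc : ConvexOn ℝ Set.univ (fun z => h z + (ρ / 2) * ‖z‖ ^ 2))
    (y₁ y₂ u₁ u₂ : EuclideanSpace ℝ (Fin d))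
    (h1 : ∀ z, h u₁ + (1 / (2 * α)) * ‖u₁ - y₁‖ ^ 2 ≤ h z + (1 / (2 * α)) * ‖z - y₁‖ ^ 2)
    (h2 : ∀ z, h u₂ + (1 / (2 * α)) * ‖u₂ - y₂‖ ^ 2 ≤ h z + (1 / (2 * α)) * ‖z - y₂‖ ^ 2) :
    (1 - α * ρ) * ‖u₁ - u₂‖ ≤ ‖y₁ - y₂‖ := by
  have A1 := prox_varineq hα hαρ hwc y₁ u₁ h1 u₂
  have A2 := prox_varineq hα hαρ hwc y₂ u₂ h2 u₁
  set c := u₁ - u₂ with hc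
  have hneg : u₂ - u₁ = -c := by rw [hc]; abel
  have e1 : (inner ℝ (u₁ - y₁) (u₂ - u₁) : ℝ) + (inner ℝ (u₂ - y₂) (u₁ - u₂) : ℝ)
      = (inner ℝ (y₁ - y₂) c : ℝ) - ‖c‖^2 := by
    rw [hneg, inner_neg_right, ← hc]
    rw [show -(inner ℝ (u₁ - y₁) c : ℝ) + (inner ℝ (u₂ - y₂) c : ℝ)
        = (inner ℝ (u₂ - y₂) c : ℝ) - (inner ℝ (u₁ - y₁) c : ℝ) from by ring]
    rw [← inner_sub_left]
    rw [show u₂ - y₂ - (u₁ - y₁) = (y₁ - y₂) - c from by rw [hc]; abel]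
    rw [inner_sub_left, real_inner_self_eq_norm_sq]
  have e2 : (inner ℝ u₁ (u₂ - u₁) : ℝ) + (inner ℝ u₂ (u₁ - u₂) : ℝ) = -‖c‖^2 := by
    rw [hneg, inner_neg_right, ← hc]
    rw [show -(inner ℝ u₁ c : ℝ) + (inner ℝ u₂ c : ℝ)
        = (inner ℝ u₂ c : ℝ) - (inner ℝ u₁ c : ℝ) from by ring]
    rw [← inner_sub_left]
    rw [show u₂ - u₁ = -c from by rw [hc]; abel]
    rw [inner_neg_left, real_inner_self_eq_norm_sq]
  have hAsum : ((h u₂ + (ρ/2)*‖u₂‖^2) - (h u₁ + (ρ/2)*‖u₁‖^2)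
        + (α⁻¹ * (inner ℝ (u₁-y₁) (u₂-u₁) : ℝ) - ρ * (inner ℝ u₁ (u₂-u₁) : ℝ)))
      + ((h u₁ + (ρ/2)*‖u₁‖^2) - (h u₂ + (ρ/2)*‖u₂‖^2)
        + (α⁻¹ * (inner ℝ (u₂-y₂) (u₁-u₂) : ℝ) - ρ * (inner ℝ u₂ (u₁-u₂) : ℝ)))
      = α⁻¹ * ((inner ℝ (y₁-y₂) c : ℝ) - ‖c‖^2) + ρ * ‖c‖^2 := by
    linear_combination α⁻¹ * e1 - ρ * e2
  have hsum : 0 ≤ α⁻¹ * ((inner ℝ (y₁-y₂) c : ℝ) - ‖c‖^2) + ρ * ‖c‖^2 := by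
    rw [← hAsum]; linarith [A1, A2]
  have hCS := real_inner_le_norm (y₁ - y₂) c
  have heq : α * (α⁻¹ * ((inner ℝ (y₁-y₂) c : ℝ) - ‖c‖^2) + ρ*‖c‖^2)
      = ((inner ℝ (y₁-y₂) c : ℝ) - ‖c‖^2) + α*ρ*‖c‖^2 := by
    field_simp
  have hineq : (1 - α*ρ) * ‖c‖^2 ≤ ‖y₁-y₂‖ * ‖c‖ := by
    have hm := mul_nonneg hα.le hsum
    linarith [hm, heq, hCS]
  rcases (norm_nonneg c).eq_or_lt with h0 | h0
  · rw [← h0]; simpa using norm_nonneg (y₁ - y₂)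
  · have hexp : ((1-α*ρ)*‖c‖)*‖c‖ = (1-α*ρ)*‖c‖^2 := by ring
    exact le_of_mul_le_mul_right (by linarith [hineq, hexp]) h0

lemma variance_id {d n : ℕ} (v : Fin n → EuclideanSpace ℝ (Fin d)) :
    (2*(n:ℝ)) * ∑ i, ‖avg v - v i‖^2 = ∑ i, ∑ j, ‖v i - v j‖^2 := by
  rcases Nat.eq_zero_or_pos n with hn | hn
  · subst hn; simp
  have hn' : ((n:ℝ)) ≠ 0 := Nat.cast_ne_zero.mpr hn.ne'
  set T := ∑ i, v i with hT
  have hrhs : ∑ i, ∑ j, ‖v i - v j‖^2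
      = (n:ℝ) * (∑ i, ‖v i‖^2) + (n:ℝ) * (∑ i, ‖v i‖^2) - 2 * ‖T‖^2 := by
    have hexp : ∀ i j : Fin n, ‖v i - v j‖^2
        = ‖v i‖^2 - 2 * (inner ℝ (v i) (v j) : ℝ) + ‖v j‖^2 := fun i j => norm_sub_sq_real _ _
    have hTT : ‖T‖^2 = ∑ i, ∑ j, (inner ℝ (v i) (v j) : ℝ) := by
      rw [← real_inner_self_eq_norm_sq, hT, sum_inner]
      exact Finset.sum_congr rfl fun i _ => inner_sum _ _ _
    simp only [hexp, Finset.sum_add_distrib, Finset.sum_sub_distrib, Finset.sum_const,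
      Finset.card_univ, Fintype.card_fin, nsmul_eq_mul, ← Finset.mul_sum, ← Finset.sum_mul]
    rw [hTT]
    push_cast
    ring
  have hlhs : ∑ i, ‖avg v - v i‖^2 = (∑ i, ‖v i‖^2) - (n:ℝ)⁻¹ * ‖T‖^2 := by
    have hexp : ∀ i : Fin n, ‖avg v - v i‖^2
        = ‖avg v‖^2 - 2 * (inner ℝ (avg v) (v i) : ℝ) + ‖v i‖^2 := fun i => norm_sub_sq_real _ _
    have havg : ‖avg v‖^2 = (n:ℝ)⁻¹^2 * ‖T‖^2 := by
      rw [avg, norm_smul, mul_pow, ← hT]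
      congr 1
      simp [Real.norm_eq_abs, sq_abs]
    have hip : ∑ i, (inner ℝ (avg v) (v i) : ℝ) = (n:ℝ)⁻¹ * ‖T‖^2 := by
      rw [← inner_sum, avg, real_inner_smul_left, ← hT, real_inner_self_eq_norm_sq]
    simp only [hexp, Finset.sum_add_distrib, Finset.sum_sub_distrib, Finset.sum_const,
      Finset.card_univ, Fintype.card_fin, nsmul_eq_mul, ← Finset.mul_sum]
    rw [hip, havg]
    field_simp
    ring
  rw [hrhs, hlhs]
  field_simp
  ring

lemma variance_le {d n : ℕ} (c : ℝ) (hc : 0 ≤ c) (uu yy : Fin n → EuclideanSpace ℝ (Fin d))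
    (hpair : ∀ i j, ‖uu i - uu j‖ ≤ c * ‖yy i - yy j‖) :
    ∑ i, ‖avg uu - uu i‖^2 ≤ c^2 * ∑ i, ‖avg yy - yy i‖^2 := by
  rcases Nat.eq_zero_or_pos n with hn | hn
  · subst hn; simp
  have hn' : (0:ℝ) < 2*(n:ℝ) := by positivity
  have key : (2*(n:ℝ)) * ∑ i, ‖avg uu - uu i‖^2 ≤ (2*(n:ℝ)) * (c^2 * ∑ i, ‖avg yy - yy i‖^2) := by
    rw [variance_id, show (2*(n:ℝ)) * (c^2 * ∑ i, ‖avg yy - yy i‖^2)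
        = c^2 * ((2*(n:ℝ)) * ∑ i, ‖avg yy - yy i‖^2) from by ring, variance_id,
      Finset.mul_sum]
    refine Finset.sum_le_sum fun i _ => ?_
    rw [Finset.mul_sum]
    refine Finset.sum_le_sum fun j _ => ?_
    have := hpair i j
    nlinarith [norm_nonneg (uu i - uu j), norm_nonneg (yy i - yy j)]
  exact le_of_mul_le_mul_left key hn'

lemma eucl_sum_apply {d n : ℕ} (c : Fin n → ℝ) (v : Fin n → EuclideanSpace ℝ (Fin d))
    (k : Fin d) : (∑ j, c j • v j) k = ∑ j, c j * v j k := by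
  induction (Finset.univ : Finset (Fin n)) using Finset.induction with
  | empty => simp
  | insert _ _ h ih => rw [Finset.sum_insert h, Finset.sum_insert h, ← ih]; rfl

lemma eucl_norm_sq {m : ℕ} (x : EuclideanSpace ℝ (Fin m)) : ‖x‖^2 = ∑ k, (x k)^2 := by
  rw [EuclideanSpace.norm_eq, Real.sq_sqrt (by positivity)]
  simp [sq_abs]

lemma blockwise_opnorm {d n : ℕ} (A : Matrix (Fin n) (Fin n) ℝ)
    (v : Fin n → EuclideanSpace ℝ (Fin d)) :
    ∑ i, ‖∑ j, A i j • v j‖^2 ≤ ‖Matrix.toEuclideanCLM (𝕜 := ℝ) A‖^2 * ∑ j, ‖v j‖^2 := by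
  have hcoord : ∀ (x : EuclideanSpace ℝ (Fin d)), ‖x‖^2 = ∑ k, (x k)^2 := eucl_norm_sq
  calc ∑ i, ‖∑ j, A i j • v j‖^2
      = ∑ i, ∑ k, ((∑ j, A i j • v j : EuclideanSpace ℝ (Fin d)) k)^2 := by
        exact Finset.sum_congr rfl fun i _ => hcoord _
    _ = ∑ k, ∑ i, (∑ j, A i j * v j k)^2 := by
        rw [Finset.sum_comm]
        refine Finset.sum_congr rfl fun k _ => Finset.sum_congr rfl fun i _ => ?_
        congr 1
        exact eucl_sum_apply _ _ _
    _ ≤ ∑ k, ‖Matrix.toEuclideanCLM (𝕜 := ℝ) A‖^2 * ∑ j, (v j k)^2 := by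
        refine Finset.sum_le_sum fun k _ => ?_
        set wk : EuclideanSpace ℝ (Fin n) := (WithLp.equiv 2 _).symm (fun j => v j k) with hwk
        have h1 : ∑ i, (∑ j, A i j * v j k)^2
            = ‖Matrix.toEuclideanCLM (𝕜 := ℝ) A wk‖^2 := by
          rw [eucl_norm_sq]
          refine Finset.sum_congr rfl fun i _ => ?_
          congr 1
        have h2 : ‖wk‖^2 = ∑ j, (v j k)^2 := by
          rw [eucl_norm_sq, hwk]
          simp
        rw [h1, ← h2]
        have h3 := (Matrix.toEuclideanCLM (𝕜 := ℝ) A).le_opNorm wk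
        nlinarith [norm_nonneg (Matrix.toEuclideanCLM (𝕜 := ℝ) A wk), norm_nonneg wk,
          norm_nonneg (Matrix.toEuclideanCLM (𝕜 := ℝ) A)]
    _ = ‖Matrix.toEuclideanCLM (𝕜 := ℝ) A‖^2 * ∑ j, ‖v j‖^2 := by
        rw [← Finset.mul_sum, Finset.sum_comm]
        congr 1
        exact Finset.sum_congr rfl fun j _ => (hcoord (v j)).symm

/-- One-step consensus contraction of the mixed proximal
update. -/
theorem prox_mixing_consensus_contraction {d n : ℕ} (ρ α : ℝ) (hρ : 0 ≤ ρ)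
    (hα : 0 < α) (hαρ : α * ρ < 1)
    (h : EuclideanSpace ℝ (Fin d) → ℝ)
    (hwc : ConvexOn ℝ Set.univ (fun z => h z + (ρ / 2) * ‖z‖ ^ 2))
    (W : Matrix (Fin n) (Fin n) ℝ) (hsym : W.IsSymm) (hnn : ∀ i j, 0 ≤ W i j)
    (hrow : ∀ i, ∑ j, W i j = 1)
    (lam : ℝ) (hlam : lam = ‖Matrix.toEuclideanCLM (𝕜 := ℝ) (W - Jmat n)‖)
    (x ν u : Fin n → EuclideanSpace ℝ (Fin d))
    (hu : ∀ i, ∀ z, h (u i) + (1 / (2 * α)) * ‖u i - (x i - α • ν i)‖ ^ 2 ≤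
      h z + (1 / (2 * α)) * ‖z - (x i - α • ν i)‖ ^ 2)
    (xplus : Fin n → EuclideanSpace ℝ (Fin d)) (hxplus : xplus = matAct W u) :
    Real.sqrt (∑ i, ‖avg xplus - xplus i‖ ^ 2) ≤
      (lam / (1 - α * ρ)) *
        Real.sqrt (∑ i, ‖(x i - avg x) - α • (ν i - avg ν)‖ ^ 2) := by
  have h1ρ : (0:ℝ) < 1 - α * ρ := by linarith
  set y : Fin n → EuclideanSpace ℝ (Fin d) := fun i => x i - α • ν i with hy
  have hlamnn : 0 ≤ lam := hlam ▸ norm_nonneg _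
  -- pairwise contraction
  have hpair : ∀ i j, ‖u i - u j‖ ≤ (1 - α*ρ)⁻¹ * ‖y i - y j‖ := by
    intro i j
    have hij := prox_pair hα hαρ hwc (y i) (y j) (u i) (u j) (hu i) (hu j)
    calc ‖u i - u j‖ = (1 - α*ρ)⁻¹ * ((1 - α*ρ) * ‖u i - u j‖) := by
          field_simp
      _ ≤ (1 - α*ρ)⁻¹ * ‖y i - y j‖ :=
          mul_le_mul_of_nonneg_left hij (inv_nonneg.mpr h1ρ.le)
  have hvar := variance_le ((1 - α*ρ)⁻¹) (inv_nonneg.mpr h1ρ.le) u y hpair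
  -- column sums
  have hcol : ∀ j, ∑ i, W i j = 1 := by
    intro j
    rw [← hrow j]
    exact Finset.sum_congr rfl fun i _ => (hsym.apply i j).symm
  -- avg xplus = avg u
  have havg : avg xplus = avg u := by
    rw [hxplus]
    unfold avg matAct
    congr 1
    rw [Finset.sum_comm]
    refine Finset.sum_congr rfl fun j _ => ?_
    rw [← Finset.sum_smul, hcol j, one_smul]
  set v : Fin n → EuclideanSpace ℝ (Fin d) := fun j => u j - avg u with hv
  -- per-index identity
  have hiId : ∀ i, avg xplus - xplus i = -(∑ j, (W - Jmat n) i j • v j) := by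
    intro i
    have hnpos : 0 < n := i.pos
    have hnz : ((n:ℝ)) ≠ 0 := Nat.cast_ne_zero.mpr hnpos.ne'
    have hsumv : ∑ j, (W - Jmat n) i j • v j = (∑ j, W i j • u j) - avg u := by
      have expand : ∀ j, (W - Jmat n) i j • v j
          = (W i j • u j - W i j • avg u) - ((n:ℝ)⁻¹ • u j - (n:ℝ)⁻¹ • avg u) := by
        intro j
        rw [hv]
        simp only [Matrix.sub_apply, Jmat, Matrix.of_apply, sub_smul, smul_sub]
        abel
      rw [Finset.sum_congr rfl fun j _ => expand j]
      rw [Finset.sum_sub_distrib, Finset.sum_sub_distrib, Finset.sum_sub_distrib]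
      rw [← Finset.sum_smul, hrow i, one_smul]
      have e1 : ∑ j : Fin n, (n:ℝ)⁻¹ • u j = avg u := by
        rw [avg, Finset.smul_sum]
      have e2 : ∑ j : Fin n, (n:ℝ)⁻¹ • avg u = avg u := by
        rw [Finset.sum_const, Finset.card_univ, Fintype.card_fin]
        rw [← Nat.cast_smul_eq_nsmul ℝ, smul_smul, mul_inv_cancel₀ hnz, one_smul]
      rw [e1, e2]
      abel
    rw [havg, hxplus, hsumv]
    unfold matAct
    abel
  -- assemble
  have hstep1 : ∑ i, ‖avg xplus - xplus i‖^2 = ∑ i, ‖∑ j, (W - Jmat n) i j • v j‖^2 :=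
    Finset.sum_congr rfl fun i _ => by rw [hiId i, norm_neg]
  have hstep2 := blockwise_opnorm (W - Jmat n) v
  have hstep3 : ∑ j, ‖v j‖^2 = ∑ i, ‖avg u - u i‖^2 :=
    Finset.sum_congr rfl fun j _ => by rw [hv, norm_sub_rev]
  have havgy : ∀ i, ‖avg y - y i‖ = ‖(x i - avg x) - α • (ν i - avg ν)‖ := by
    intro i
    rw [norm_sub_rev]
    congr 1
    have : avg y = avg x - α • avg ν := by
      unfold avg
      rw [hy, Finset.sum_sub_distrib, ← Finset.smul_sum, smul_sub, smul_comm]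
    rw [this, hy, smul_sub]
    beta_reduce
    abel
  have hsum_y : ∑ i, ‖avg y - y i‖^2 = ∑ i, ‖(x i - avg x) - α • (ν i - avg ν)‖^2 :=
    Finset.sum_congr rfl fun i _ => by rw [havgy i]
  set S := ∑ i, ‖(x i - avg x) - α • (ν i - avg ν)‖^2 with hS
  have hSnn : 0 ≤ S := Finset.sum_nonneg fun i _ => sq_nonneg _
  have hchain : ∑ i, ‖avg xplus - xplus i‖^2 ≤ (lam * (1 - α*ρ)⁻¹)^2 * S := by
    rw [hstep1]
    calc ∑ i, ‖∑ j, (W - Jmat n) i j • v j‖^2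
        ≤ ‖Matrix.toEuclideanCLM (𝕜 := ℝ) (W - Jmat n)‖^2 * ∑ j, ‖v j‖^2 := hstep2
      _ = lam^2 * ∑ i, ‖avg u - u i‖^2 := by rw [hstep3, hlam]
      _ ≤ lam^2 * (((1 - α*ρ)⁻¹)^2 * ∑ i, ‖avg y - y i‖^2) :=
          mul_le_mul_of_nonneg_left hvar (sq_nonneg _)
      _ = (lam * (1 - α*ρ)⁻¹)^2 * S := by rw [hsum_y]; ring
  calc Real.sqrt (∑ i, ‖avg xplus - xplus i‖^2)
      ≤ Real.sqrt ((lam * (1 - α*ρ)⁻¹)^2 * S) := Real.sqrt_le_sqrt hchain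
    _ = (lam * (1 - α*ρ)⁻¹) * Real.sqrt S := by
        rw [Real.sqrt_mul (sq_nonneg _), Real.sqrt_sq (by positivity)]
    _ = (lam / (1 - α*ρ)) * Real.sqrt S := by rw [div_eq_mul_inv]

end
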